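/- Let c = (c_i)_{i≥1} be a cost vector of nonnegative reals such that c_{i+1} - c_i ≤ c_t for all i ≥ t, let 2 ≤ t ≤ k, and let x₁ ≥ x₂ ≥ … ≥ x_k ≥ 0 be reals with Σ_i x_i = 1. Then there exists a feasible solution f to the cover LP with parameters x₁, …, x_k such that ‖f‖_c ≤ c_t · (∏_{i=1}^{t-1} x_i) · (1 - Σ_{i=1}^{t-1} x_i). -/

import Mathlib

open scoped Classical
open Finset

/-- `K` is a clique of `G`: a nonempty set of pairwise adjacent vertices. -/
def IsCliqueOf {V : Type} [Fintype V] [DecidableEq V] (G : SimpleGraph V) (K : Finset V) : Prop :=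
  K.Nonempty ∧ G.IsClique (K : Set V)

/-- Total `c`-cost of a weighting `f` of the finsets of vertices. -/
noncomputable def cliqueCost {V : Type} [Fintype V] [DecidableEq V]
    (c : ℕ → ℝ) (f : Finset V → ℝ) : ℝ :=
  ∑ K : Finset V, c K.card * f K

/-- `f` is a fractional `t`-clique cover of `G`. -/
def IsFracCover {V : Type} [Fintype V] [DecidableEq V]
    (t : ℕ) (G : SimpleGraph V) (f : Finset V → ℝ) : Prop :=
  (∀ K, 0 ≤ f K) ∧ (∀ K, ¬ IsCliqueOf G K → f K = 0) ∧
  ∀ T : Finset V, T.card = t → G.IsClique (T : Set V) →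
    1 ≤ ∑ K ∈ Finset.univ.filter (fun K => T ⊆ K), f K

/-- `f` is a fractional `t`-clique decomposition of `G`. -/
def IsFracDecomp {V : Type} [Fintype V] [DecidableEq V]
    (t : ℕ) (G : SimpleGraph V) (f : Finset V → ℝ) : Prop :=
  (∀ K, 0 ≤ f K) ∧ (∀ K, ¬ IsCliqueOf G K → f K = 0) ∧
  ∀ T : Finset V, T.card = t → G.IsClique (T : Set V) →
    ∑ K ∈ Finset.univ.filter (fun K => T ⊆ K), f K = 1

/-- `f` is an integer (`{0,1}`-valued) `t`-clique cover of `G`. -/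
def IsIntCover {V : Type} [Fintype V] [DecidableEq V]
    (t : ℕ) (G : SimpleGraph V) (f : Finset V → ℝ) : Prop :=
  IsFracCover t G f ∧ ∀ K, f K = 0 ∨ f K = 1

/-- `f` is an integer (`{0,1}`-valued) `t`-clique decomposition of `G`. -/
def IsIntDecomp {V : Type} [Fintype V] [DecidableEq V]
    (t : ℕ) (G : SimpleGraph V) (f : Finset V → ℝ) : Prop :=
  IsFracDecomp t G f ∧ ∀ K, f K = 0 ∨ f K = 1

/-- θ*_t(G,c): minimum total c-cost of a fractional t-clique cover. -/
noncomputable def thetaFrac {V : Type} [Fintype V] [DecidableEq V]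
    (t : ℕ) (G : SimpleGraph V) (c : ℕ → ℝ) : ℝ :=
  sInf { x | ∃ f, IsFracCover t G f ∧ x = cliqueCost c f }

/-- θ_t(G,c): minimum total c-cost of an integer t-clique cover. -/
noncomputable def thetaInt {V : Type} [Fintype V] [DecidableEq V]
    (t : ℕ) (G : SimpleGraph V) (c : ℕ → ℝ) : ℝ :=
  sInf { x | ∃ f, IsIntCover t G f ∧ x = cliqueCost c f }

/-- π*_t(G,c): minimum total c-cost of a fractional t-clique decomposition. -/
noncomputable def piFrac {V : Type} [Fintype V] [DecidableEq V]
    (t : ℕ) (G : SimpleGraph V) (c : ℕ → ℝ) : ℝ :=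
  sInf { x | ∃ f, IsFracDecomp t G f ∧ x = cliqueCost c f }

/-- π_t(G,c): minimum total c-cost of an integer t-clique decomposition. -/
noncomputable def piInt {V : Type} [Fintype V] [DecidableEq V]
    (t : ℕ) (G : SimpleGraph V) (c : ℕ → ℝ) : ℝ :=
  sInf { x | ∃ f, IsIntDecomp t G f ∧ x = cliqueCost c f }

/-- `G` is complete multipartite: vertices can be assigned to parts so that
adjacency holds exactly between distinct parts. -/
def IsCompleteMultipartite {V : Type} [Fintype V] [DecidableEq V]
    (G : SimpleGraph V) : Prop :=
  ∃ p : V → ℕ, ∀ u v, G.Adj u v ↔ p u ≠ p v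

/-- `f` is a feasible solution to the cover LP with parameters `x`. -/
def CoverLPFeasible (t : ℕ) {k : ℕ} (x : Fin k → ℝ) (f : Finset (Fin k) → ℝ) : Prop :=
  (∀ I, 0 ≤ f I) ∧
  ∀ T : Finset (Fin k), T.card = t →
    (∏ i ∈ T, x i) ≤ ∑ I ∈ Finset.univ.filter (fun I => T ⊆ I), f I

/-- `f` is a feasible solution to the decomposition LP with parameters `x`. -/
def DecompLPFeasible (t : ℕ) {k : ℕ} (x : Fin k → ℝ) (f : Finset (Fin k) → ℝ) : Prop :=
  (∀ I, 0 ≤ f I) ∧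
  ∀ T : Finset (Fin k), T.card = t →
    ∑ I ∈ Finset.univ.filter (fun I => T ⊆ I), f I = ∏ i ∈ T, x i

/-- The `c`-cost of an LP solution `f`. -/
noncomputable def lpCost (c : ℕ → ℝ) {k : ℕ} (f : Finset (Fin k) → ℝ) : ℝ :=
  ∑ I : Finset (Fin k), c I.card * f I

open Finset

-- product over a set is at most product over an initial segment, for sorted x
lemma prodle_aux {k : ℕ} (x : Fin k → ℝ) (hx0 : ∀ i, 0 ≤ x i)
    (hmono : ∀ i j : Fin k, i ≤ j → x j ≤ x i)
    (xv : ℕ → ℝ) (hxv : ∀ (j : ℕ) (h : j < k), xv j = x ⟨j, h⟩)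
    (A : Finset (Fin k)) :
    ∏ i ∈ A, x i ≤ ∏ j ∈ Finset.range A.card, xv j := by
  set s := A.card with hs
  have hsk : s ≤ k := by
    simpa using A.card_le_univ.trans_eq (by simp)
  let e := A.orderEmbOfFin hs.symm
  have he : ∀ n (h : n < s), n ≤ (e ⟨n, h⟩ : ℕ) := by
    intro n
    induction n with
    | zero => intro h; exact Nat.zero_le _
    | succ m ih =>
      intro h
      have hm : m < s := Nat.lt_of_succ_lt h
      have h1 : (e ⟨m, hm⟩ : Fin k) < e ⟨m+1, h⟩ := by
        apply e.strictMono
        exact Fin.mk_lt_mk.mpr (Nat.lt_succ_self m)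
      have := ih hm
      omega
  have h1 : ∏ i ∈ A, x i = ∏ j : Fin s, x (e j) := by
    refine (Finset.prod_bij (fun (j : Fin s) _ => e j) ?_ ?_ ?_ ?_).symm
    · intro j _; exact A.orderEmbOfFin_mem hs.symm j
    · intro a _ b _ hab; exact e.injective hab
    · intro a ha
      have : a ∈ Set.range e := by
        rw [Finset.range_orderEmbOfFin]; exact ha
      obtain ⟨j, hj⟩ := this
      exact ⟨j, Finset.mem_univ j, hj⟩
    · intro j _; rfl
  rw [h1, ← Fin.prod_univ_eq_prod_range]
  apply Finset.prod_le_prod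
  · intro j _; exact hx0 _
  · intro j _
    have hjk : (j : ℕ) < k := lt_of_lt_of_le j.isLt hsk
    rw [hxv _ hjk]
    apply hmono
    have := he j j.isLt
    simpa [Fin.le_def] using this

-- Abel summation bound
lemma abel_aux (t : ℕ) (c : ℕ → ℝ) (y : ℕ → ℝ) (hy : ∀ i, 0 ≤ y i)
    (hstep : ∀ i, t ≤ i → c (i + 1) - c i ≤ c t) :
    ∀ n, (∑ i ∈ Finset.range n, c (t + i) * (y i - y (i + 1))) + c (t + n) * y n
      ≤ c t * ∑ i ∈ Finset.range (n + 1), y i := by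
  intro n
  induction n with
  | zero => simp
  | succ m ih =>
    rw [Finset.sum_range_succ, Finset.sum_range_succ (f := y)]
    have h1 : c (t + m + 1) - c (t + m) ≤ c t := hstep (t + m) (Nat.le_add_right t m)
    have h2 : (c (t + (m+1)) - c (t + m)) * y (m + 1) ≤ c t * y (m + 1) := by
      have : c (t + (m+1)) - c (t + m) ≤ c t := by
        have : t + (m + 1) = t + m + 1 := by ring
        rw [this]; exact h1
      exact mul_le_mul_of_nonneg_right this (hy _)
    nlinarith [ih, hy (m+1)]

/-- Lemma 3.2: if `c_{i+1} - c_i ≤ c_t` for all `i ≥ t` and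
`x 0 ≥ x 1 ≥ … ≥ x (k-1) ≥ 0` sum to `1`, then the cover LP has a feasible
solution of cost at most `c_t · (∏_{i<t-1} x i) · (1 - ∑_{i<t-1} x i)`. -/
theorem stmt12 (k t : ℕ) (ht : 2 ≤ t) (htk : t ≤ k) (c : ℕ → ℝ)
    (hc : ∀ i, 1 ≤ i → 0 ≤ c i) (hstep : ∀ i, t ≤ i → c (i + 1) - c i ≤ c t)
    (x : Fin k → ℝ) (hx0 : ∀ i, 0 ≤ x i)
    (hmono : ∀ i j : Fin k, i ≤ j → x j ≤ x i)
    (hsum : ∑ i, x i = 1) :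
    ∃ f : Finset (Fin k) → ℝ, CoverLPFeasible t x f ∧
      lpCost c f ≤ c t *
        (∏ i ∈ Finset.univ.filter (fun i : Fin k => (i : ℕ) < t - 1), x i) *
        (1 - ∑ i ∈ Finset.univ.filter (fun i : Fin k => (i : ℕ) < t - 1), x i) := by
  classical
  set xv : ℕ → ℝ := fun j => if h : j < k then x ⟨j, h⟩ else 0 with hxvdef
  have hxv : ∀ (j : ℕ) (h : j < k), xv j = x ⟨j, h⟩ := fun j h => dif_pos h
  have hxvk : ∀ j, k ≤ j → xv j = 0 := fun j h => dif_neg (by omega)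
  have hxv0 : ∀ j, 0 ≤ xv j := by
    intro j
    by_cases h : j < k
    · rw [hxv j h]; exact hx0 _
    · rw [hxvk j (by omega)]
  have hxvmono : ∀ a b : ℕ, a ≤ b → xv b ≤ xv a := by
    intro a b hab
    by_cases hb : b < k
    · have ha : a < k := by omega
      rw [hxv a ha, hxv b hb]
      exact hmono _ _ (by simpa [Fin.le_def] using hab)
    · rw [hxvk b (by omega)]; exact hxv0 a
  set P : ℝ := ∏ j ∈ Finset.range (t - 1), xv j with hPdef
  have hP0 : 0 ≤ P := Finset.prod_nonneg fun j _ => hxv0 j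
  set w : ℕ → ℝ := fun j => P * (xv (j - 1) - xv j) with hwdef
  have hw0 : ∀ j, 0 ≤ w j :=
    fun j => mul_nonneg hP0 (sub_nonneg.mpr (hxvmono _ _ (by omega)))
  set pre : ℕ → Finset (Fin k) := fun j => Finset.univ.filter (fun i => (i : ℕ) < j)
    with hpredef
  have hmem_pre : ∀ j (i : Fin k), i ∈ pre j ↔ (i : ℕ) < j := by
    intro j i; simp [hpredef]
  have hcard_pre : ∀ j, j ≤ k → (pre j).card = j := by
    intro j hj
    rw [← Finset.card_image_of_injective (pre j) Fin.val_injective]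
    have : (pre j).image Fin.val = Finset.range j := by
      ext n
      simp only [Finset.mem_image, Finset.mem_range]
      constructor
      · rintro ⟨i, hi, rfl⟩; exact (hmem_pre j i).mp hi
      · intro hn
        exact ⟨⟨n, by omega⟩, (hmem_pre j _).mpr hn, rfl⟩
    rw [this, Finset.card_range]
  set f : Finset (Fin k) → ℝ :=
    fun I => ∑ j ∈ Finset.Ico t (k + 1), if pre j = I then w j else 0 with hfdef
  have hsum_f : ∀ (A : Finset (Finset (Fin k))) (g : Finset (Fin k) → ℝ),
      ∑ I ∈ A, g I * f I
        = ∑ j ∈ Finset.Ico t (k + 1), if pre j ∈ A then g (pre j) * w j else 0 := by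
    intro A g
    calc ∑ I ∈ A, g I * f I
        = ∑ I ∈ A, ∑ j ∈ Finset.Ico t (k + 1),
            (if pre j = I then g I * w j else 0) := by
          refine Finset.sum_congr rfl fun I _ => ?_
          rw [hfdef, Finset.mul_sum]
          refine Finset.sum_congr rfl fun j _ => ?_
          split_ifs <;> simp
      _ = ∑ j ∈ Finset.Ico t (k + 1), ∑ I ∈ A,
            (if pre j = I then g I * w j else 0) := Finset.sum_comm
      _ = ∑ j ∈ Finset.Ico t (k + 1), if pre j ∈ A then g (pre j) * w j else 0 := by
          refine Finset.sum_congr rfl fun j _ => ?_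
          exact Finset.sum_ite_eq A (pre j) _
  have hf0 : ∀ I, 0 ≤ f I := by
    intro I
    apply Finset.sum_nonneg
    intro j _
    split_ifs
    · exact hw0 j
    · exact le_rfl
  -- telescoping sum of w over Ico M (k+1)
  have htel : ∀ M, 1 ≤ M → M ≤ k + 1 →
      ∑ j ∈ Finset.Ico M (k + 1), w j = P * xv (M - 1) := by
    intro M hM1 hMk
    have h1 : ∀ j ∈ Finset.Ico M (k + 1), w j = P * (xv (M - 1 + (j - M)) - xv (M - 1 + (j - M + 1))) := by
      intro j hj
      rw [Finset.mem_Ico] at hj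
      rw [hwdef]
      have e1 : M - 1 + (j - M) = j - 1 := by omega
      have e2 : M - 1 + (j - M + 1) = j := by omega
      rw [e1, e2]
    rw [Finset.sum_congr rfl h1, ← Finset.mul_sum]
    congr 1
    rw [Finset.sum_Ico_eq_sum_range]
    have h2 : ∀ i ∈ Finset.range (k + 1 - M),
        xv (M - 1 + (M + i - M)) - xv (M - 1 + (M + i - M + 1))
          = xv (M - 1 + i) - xv (M - 1 + (i + 1)) := by
      intro i _
      have : M + i - M = i := by omega
      rw [this]
    rw [Finset.sum_congr rfl h2, Finset.sum_range_sub' (f := fun i => xv (M - 1 + i))]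
    have : M - 1 + (k + 1 - M) = k := by omega
    rw [this, hxvk k le_rfl, sub_zero, Nat.add_zero]
  -- feasibility
  have hfeas : CoverLPFeasible t x f := by
    refine ⟨hf0, ?_⟩
    intro T hT
    have hTne : T.Nonempty := Finset.card_pos.mp (by omega)
    set m := T.max' hTne with hmdef
    set M := (m : ℕ) + 1 with hMdef
    have hMk : M ≤ k := m.isLt
    have hsubpre : ∀ j, T ⊆ pre j ↔ M ≤ j := by
      intro j
      constructor
      · intro h
        have := (hmem_pre j m).mp (h (T.max'_mem hTne))
        omega
      · intro h i hi
        rw [hmem_pre]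
        have := T.le_max' i hi
        rw [Fin.le_def] at this
        omega
    have htM : t ≤ M := by
      have h1 : T ⊆ pre M := (hsubpre M).mpr le_rfl
      have := Finset.card_le_card h1
      rw [hcard_pre M hMk, hT] at this
      exact this
    have hsum1 : ∑ I ∈ Finset.univ.filter (fun I => T ⊆ I), f I
        = ∑ j ∈ Finset.Ico M (k + 1), w j := by
      have h0 := hsum_f (Finset.univ.filter (fun I => T ⊆ I)) (fun _ => 1)
      simp only [one_mul] at h0
      rw [h0]
      calc ∑ j ∈ Finset.Ico t (k + 1),
              (if pre j ∈ Finset.univ.filter (fun I => T ⊆ I) then w j else 0)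
          = ∑ j ∈ Finset.Ico t (k + 1), (if M ≤ j then w j else 0) := by
            refine Finset.sum_congr rfl fun j _ => ?_
            simp only [Finset.mem_filter, Finset.mem_univ, true_and, hsubpre j]
        _ = ∑ j ∈ (Finset.Ico t (k + 1)).filter (fun j => M ≤ j), w j := by
            rw [Finset.sum_filter]
        _ = ∑ j ∈ Finset.Ico M (k + 1), w j := by
            congr 1
            ext j
            simp only [Finset.mem_filter, Finset.mem_Ico]
            omega
    rw [hsum1, htel M (by omega) (by omega)]
    -- product bound
    have h3 : xv (M - 1) = x m := by
      have e : M - 1 = (m : ℕ) := by omega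
      rw [e, hxv _ m.isLt]
    have h2 : ∏ i ∈ T.erase m, x i ≤ P := by
      have := prodle_aux x hx0 hmono xv (fun j h => hxv j h) (T.erase m)
      rwa [Finset.card_erase_of_mem (T.max'_mem hTne), hT] at this
    calc ∏ i ∈ T, x i = (∏ i ∈ T.erase m, x i) * x m :=
          (Finset.prod_erase_mul T x (T.max'_mem hTne)).symm
      _ ≤ P * x m := mul_le_mul_of_nonneg_right h2 (hx0 m)
      _ = P * xv (M - 1) := by rw [h3]
  -- cost computation
  have hcost1 : lpCost c f = ∑ j ∈ Finset.Ico t (k + 1), c j * w j := by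
    show ∑ I : Finset (Fin k), c I.card * f I = _
    rw [hsum_f Finset.univ (fun I => c I.card)]
    refine Finset.sum_congr rfl fun j hj => ?_
    rw [Finset.mem_Ico] at hj
    rw [if_pos (Finset.mem_univ _), hcard_pre j (by omega)]
  have hxi : ∀ i : Fin k, xv (i : ℕ) = x i := by
    intro i; rw [hxv _ i.isLt]
  have habel : ∑ j ∈ Finset.Ico t (k + 1), c j * w j
      ≤ c t * P * (∑ j ∈ Finset.Ico (t - 1) k, xv j) := by
    have h1 : ∀ j ∈ Finset.Ico t (k + 1),
        c j * w j = P * (c j * (xv (j - 1) - xv j)) := by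
      intro j _; rw [hwdef]; ring
    rw [Finset.sum_congr rfl h1, ← Finset.mul_sum]
    have key : ∑ j ∈ Finset.Ico t (k + 1), c j * (xv (j - 1) - xv j)
        ≤ c t * ∑ i ∈ Finset.range (k - t + 1), xv (t - 1 + i) := by
      have hA := abel_aux t c (fun i => xv (t - 1 + i)) (fun i => hxv0 _) hstep (k - t + 1)
      have h3 : xv (t - 1 + (k - t + 1)) = 0 := hxvk _ (by omega)
      rw [Finset.sum_Ico_eq_sum_range]
      have e : k + 1 - t = k - t + 1 := by omega
      rw [e]
      have h2 : ∀ i ∈ Finset.range (k - t + 1),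
          c (t + i) * (xv (t + i - 1) - xv (t + i))
            = c (t + i) * (xv (t - 1 + i) - xv (t - 1 + (i + 1))) := by
        intro i _
        have e1 : t + i - 1 = t - 1 + i := by omega
        have e2 : t + i = t - 1 + (i + 1) := by omega
        rw [e1, e2]
      rw [Finset.sum_congr rfl h2]
      calc ∑ i ∈ Finset.range (k - t + 1), c (t + i) * (xv (t - 1 + i) - xv (t - 1 + (i + 1)))
          = (∑ i ∈ Finset.range (k - t + 1),
              c (t + i) * (xv (t - 1 + i) - xv (t - 1 + (i + 1))))
            + c (t + (k - t + 1)) * xv (t - 1 + (k - t + 1)) := by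
            rw [h3, mul_zero, add_zero]
        _ ≤ c t * ∑ i ∈ Finset.range (k - t + 1 + 1), xv (t - 1 + i) := hA
        _ = c t * ∑ i ∈ Finset.range (k - t + 1), xv (t - 1 + i) := by
            rw [Finset.sum_range_succ, h3, add_zero]
    have hIco : ∑ j ∈ Finset.Ico (t - 1) k, xv j
        = ∑ i ∈ Finset.range (k - t + 1), xv (t - 1 + i) := by
      rw [Finset.sum_Ico_eq_sum_range]
      have e : k - (t - 1) = k - t + 1 := by omega
      rw [e]
    rw [hIco]
    calc P * (∑ j ∈ Finset.Ico t (k + 1), c j * (xv (j - 1) - xv j))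
        ≤ P * (c t * ∑ i ∈ Finset.range (k - t + 1), xv (t - 1 + i)) :=
          mul_le_mul_of_nonneg_left key hP0
      _ = c t * P * (∑ i ∈ Finset.range (k - t + 1), xv (t - 1 + i)) := by ring
  -- relate filter sums/products over Fin k to range sums of xv
  have hfilsum : ∑ i ∈ Finset.univ.filter (fun i : Fin k => (i : ℕ) < t - 1), x i
      = ∑ j ∈ Finset.range (t - 1), xv j := by
    calc ∑ i ∈ Finset.univ.filter (fun i : Fin k => (i : ℕ) < t - 1), x i
        = ∑ i : Fin k, (if (i : ℕ) < t - 1 then xv (i : ℕ) else 0) := by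
          rw [Finset.sum_filter]
          refine Finset.sum_congr rfl fun i _ => ?_
          rw [hxi i]
      _ = ∑ j ∈ Finset.range k, (if j < t - 1 then xv j else 0) :=
          Fin.sum_univ_eq_sum_range (fun j => if j < t - 1 then xv j else 0) k
      _ = ∑ j ∈ Finset.range (t - 1), xv j := by
          rw [← Finset.sum_filter]
          congr 1
          ext j
          simp only [Finset.mem_filter, Finset.mem_range]
          omega
  have hfilprod : ∏ i ∈ Finset.univ.filter (fun i : Fin k => (i : ℕ) < t - 1), x i = P := by
    calc ∏ i ∈ Finset.univ.filter (fun i : Fin k => (i : ℕ) < t - 1), x i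
        = ∏ i : Fin k, (if (i : ℕ) < t - 1 then xv (i : ℕ) else 1) := by
          rw [Finset.prod_filter]
          refine Finset.prod_congr rfl fun i _ => ?_
          rw [hxi i]
      _ = ∏ j ∈ Finset.range k, (if j < t - 1 then xv j else 1) :=
          Fin.prod_univ_eq_prod_range (fun j => if j < t - 1 then xv j else 1) k
      _ = ∏ j ∈ Finset.range (t - 1), xv j := by
          rw [← Finset.prod_filter]
          congr 1
          ext j
          simp only [Finset.mem_filter, Finset.mem_range]
          omega
  have hall : ∑ j ∈ Finset.range k, xv j = 1 := by
    calc ∑ j ∈ Finset.range k, xv j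
        = ∑ i : Fin k, xv (i : ℕ) := (Fin.sum_univ_eq_sum_range (fun j => xv j) k).symm
      _ = ∑ i : Fin k, x i := Finset.sum_congr rfl fun i _ => hxi i
      _ = 1 := hsum
  have h1S : ∑ j ∈ Finset.Ico (t - 1) k, xv j = 1 - ∑ j ∈ Finset.range (t - 1), xv j := by
    have hsplit : (∑ j ∈ Finset.range (t - 1), xv j) + ∑ j ∈ Finset.Ico (t - 1) k, xv j
        = ∑ j ∈ Finset.range k, xv j := by
      rw [Finset.range_eq_Ico, Finset.range_eq_Ico]
      exact Finset.sum_Ico_consecutive xv (by omega : 0 ≤ t - 1) (by omega : t - 1 ≤ k)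
    rw [hall] at hsplit
    linarith
  refine ⟨f, hfeas, ?_⟩
  rw [hcost1, hfilprod, hfilsum, ← h1S]
  exact habel
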